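/- arXiv:1801.03484 — 4 statements merged into one kernel-verified Lean document; each statement's English description precedes it below -/
import Mathlib

section
/- Let θ_i > 0, let H and K be disjoint finite index sets, and let θ_j > 0 for every j ∈ H ∪ K. Then ∫_0^∞ (1/θ_i)·exp(−x/θ_i) · ∏_{j ∈ H} exp(−x/θ_j) · ∏_{k ∈ K} (1 − exp(−x/θ_k)) dx = Σ_{φ ⊆ K} (−1)^{|φ|} / ( θ_i · ( 1/θ_i + Σ_{j ∈ H} 1/θ_j + Σ_{p ∈ φ} 1/θ_p ) ), where the sum ranges over all subsets φ of K. -/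
open Finset Real MeasureTheory

lemma integral_exp_neg_mul_Ioi_zero {c : ℝ} (hc : 0 < c) :
    ∫ x in Set.Ioi (0 : ℝ), Real.exp (-c * x) = 1 / c := by
  have hderiv : ∀ x ∈ Set.Ici (0 : ℝ),
      HasDerivAt (fun x => -Real.exp (-c * x) / c) (Real.exp (-c * x)) x := by
    intro x _
    have h := (((hasDerivAt_id x).const_mul (-c)).exp).neg.div_const c
    refine h.congr_deriv ?_
    simp only [id]
    field_simp
  have hint : IntegrableOn (fun x => Real.exp (-c * x)) (Set.Ioi (0 : ℝ)) :=
    exp_neg_integrableOn_Ioi 0 hc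
  have htend : Filter.Tendsto (fun x => -Real.exp (-c * x) / c) Filter.atTop (nhds 0) := by
    have h1 : Filter.Tendsto (fun x : ℝ => -c * x) Filter.atTop Filter.atBot :=
      Filter.tendsto_id.const_mul_atTop_of_neg (neg_neg_iff_pos.2 hc)
    have : Filter.Tendsto (fun x : ℝ => Real.exp (-c * x)) Filter.atTop (nhds 0) :=
      Real.tendsto_exp_atBot.comp h1
    simpa using (this.neg.div_const c)
  have h := MeasureTheory.integral_Ioi_of_hasDerivAt_of_tendsto' hderiv hint htend
  rw [h]
  simp
  ring

/-- The key integral identity of the ONETS regret analysis (Eq. (6) to Eq. (7)):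
integrating arm `i`'s exponential density against the tails of the arms in `H`
and the CDFs of the arms in `K` gives an inclusion–exclusion closed form. -/
theorem integral_expDensity_mul_tails_mul_cdfs
    {ι : Type*} [DecidableEq ι] (i : ι) (θ : ι → ℝ) (H K : Finset ι)
    (hHK : Disjoint H K) (hi : 0 < θ i) (hθ : ∀ j ∈ H ∪ K, 0 < θ j) :
    ∫ x in Set.Ioi (0 : ℝ),
        (1 / θ i) * Real.exp (-x / θ i) *
          (∏ j ∈ H, Real.exp (-x / θ j)) *
          (∏ k ∈ K, (1 - Real.exp (-x / θ k))) =
      ∑ φ ∈ K.powerset,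
        (-1 : ℝ) ^ φ.card /
          (θ i * (1 / θ i + ∑ j ∈ H, 1 / θ j + ∑ p ∈ φ, 1 / θ p)) := by
  set c : Finset ι → ℝ := fun φ => 1 / θ i + ∑ j ∈ H, 1 / θ j + ∑ p ∈ φ, 1 / θ p with hc
  have hcpos : ∀ φ ∈ K.powerset, 0 < c φ := by
    intro φ hφ
    rw [Finset.mem_powerset] at hφ
    have h1 : 0 < 1 / θ i := by positivity
    have h2 : 0 ≤ ∑ j ∈ H, 1 / θ j :=
      Finset.sum_nonneg fun j hj => by
        have := hθ j (Finset.mem_union_left _ hj); positivity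
    have h3 : 0 ≤ ∑ p ∈ φ, 1 / θ p :=
      Finset.sum_nonneg fun p hp => by
        have := hθ p (Finset.mem_union_right _ (hφ hp)); positivity
    simp only [hc]
    linarith
  have hpt : ∀ x : ℝ,
      (1 / θ i) * Real.exp (-x / θ i) *
          (∏ j ∈ H, Real.exp (-x / θ j)) *
          (∏ k ∈ K, (1 - Real.exp (-x / θ k))) =
      ∑ φ ∈ K.powerset, (-1 : ℝ) ^ φ.card * ((1 / θ i) * Real.exp (-(c φ) * x)) := by
    intro x
    have hexpand : (∏ k ∈ K, (1 - Real.exp (-x / θ k))) =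
        ∑ φ ∈ K.powerset, (-1 : ℝ) ^ φ.card * ∏ p ∈ φ, Real.exp (-x / θ p) := by
      have h := Finset.prod_add (fun k => -Real.exp (-x / θ k)) (fun _ => (1 : ℝ)) K
      simp only [Finset.prod_const_one, mul_one] at h
      rw [show (∏ k ∈ K, (1 - Real.exp (-x / θ k))) =
          ∏ k ∈ K, (-Real.exp (-x / θ k) + 1) from
        Finset.prod_congr rfl fun k _ => by ring, h]
      refine Finset.sum_congr rfl fun φ _ => ?_
      have hneg : ∏ p ∈ φ, -Real.exp (-x / θ p) =
          ∏ p ∈ φ, ((-1 : ℝ) * Real.exp (-x / θ p)) :=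
        Finset.prod_congr rfl fun p _ => (neg_one_mul _).symm
      rw [hneg, Finset.prod_mul_distrib, Finset.prod_const]
    rw [hexpand, Finset.mul_sum]
    apply Finset.sum_congr rfl
    intro φ hφ
    have hkey : Real.exp (-x / θ i) * (∏ j ∈ H, Real.exp (-x / θ j)) *
        (∏ p ∈ φ, Real.exp (-x / θ p)) = Real.exp (-(c φ) * x) := by
      rw [← Real.exp_sum, ← Real.exp_sum, ← Real.exp_add, ← Real.exp_add]
      congr 1
      have hH : ∑ j ∈ H, -x / θ j = -x * ∑ j ∈ H, 1 / θ j := by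
        rw [Finset.mul_sum]; exact Finset.sum_congr rfl fun j _ => by ring
      have hφ' : ∑ p ∈ φ, -x / θ p = -x * ∑ p ∈ φ, 1 / θ p := by
        rw [Finset.mul_sum]; exact Finset.sum_congr rfl fun p _ => by ring
      rw [hH, hφ']
      simp only [hc]
      ring
    calc (1 / θ i) * Real.exp (-x / θ i) * (∏ j ∈ H, Real.exp (-x / θ j)) *
          ((-1 : ℝ) ^ φ.card * ∏ p ∈ φ, Real.exp (-x / θ p))
        = (-1 : ℝ) ^ φ.card * ((1 / θ i) * (Real.exp (-x / θ i) *
            (∏ j ∈ H, Real.exp (-x / θ j)) * (∏ p ∈ φ, Real.exp (-x / θ p)))) := by ring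
      _ = (-1 : ℝ) ^ φ.card * ((1 / θ i) * Real.exp (-(c φ) * x)) := by rw [hkey]
  simp_rw [hpt]
  rw [MeasureTheory.integral_finset_sum]
  · apply Finset.sum_congr rfl
    intro φ hφ
    rw [MeasureTheory.integral_const_mul, MeasureTheory.integral_const_mul,
      integral_exp_neg_mul_Ioi_zero (hcpos φ hφ)]
    rw [div_mul_div_comm, one_mul, mul_one_div]
  · intro φ hφ
    exact (((exp_neg_integrableOn_Ioi 0 (hcpos φ hφ)).const_mul (1 / θ i)).const_mul _)
end

section
/- Let I be a finite index set with a distinguished element i, let H and K be disjoint subsets of I \ {i}, let r : I → ℝ with r_j > 0 for all j, and let (X_j)_{j∈I} be independent random variables where X_j has the exponential distribution with rate r_j. Then the probability that X_j ≥ X_i for every j ∈ H and X_k ≤ X_i for every k ∈ K equals Σ_{φ ⊆ K} (−1)^{|φ|} · r_i / ( r_i + Σ_{j ∈ H} r_j + Σ_{p ∈ φ} r_p ). -/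
open Finset Real MeasureTheory ProbabilityTheory Set
open scoped ENNReal

lemma myExpMeasure_Iic {r : ℝ} (hr : 0 < r) (t : ℝ) :
    expMeasure r (Iic t) = ENNReal.ofReal (1 - Real.exp (-(r * max t 0))) := by
  have hpdf : gammaPDF 1 r = exponentialPDF r := by
    funext x; simp [gammaPDF, exponentialPDF, exponentialPDFReal]
  rw [expMeasure, gammaMeasure, withDensity_apply _ measurableSet_Iic, hpdf,
    lintegral_exponentialPDF_eq_antiDeriv hr t]
  split_ifs with h
  · rw [max_eq_left h]
  · rw [max_eq_right (le_of_not_ge h)]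
    simp

lemma myExpMeasure_Ici {r : ℝ} (hr : 0 < r) (t : ℝ) :
    expMeasure r (Ici t) = ENNReal.ofReal (Real.exp (-(r * max t 0))) := by
  have hP : IsProbabilityMeasure (expMeasure r) := isProbabilityMeasure_expMeasure hr
  have hsing : expMeasure r {t} = 0 := by
    have : expMeasure r ≪ volume := by
      rw [expMeasure, gammaMeasure]; exact withDensity_absolutelyContinuous _ _
    exact this (measure_singleton t)
  have hIio : expMeasure r (Iio t) = ENNReal.ofReal (1 - Real.exp (-(r * max t 0))) := by
    rw [← myExpMeasure_Iic hr t, ← Iio_union_right]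
    rw [measure_union (by simp) (measurableSet_singleton t), hsing, add_zero]
  have hcompl : Ici t = (Iio t)ᶜ := compl_Iio.symm
  have hle : Real.exp (-(r * max t 0)) ≤ 1 := by
    rw [Real.exp_le_one_iff]
    simp only [neg_nonpos]
    positivity
  rw [hcompl, measure_compl measurableSet_Iio (measure_ne_top _ _), hIio, measure_univ]
  rw [← ENNReal.ofReal_one, ← ENNReal.ofReal_sub _ (by linarith [Real.exp_pos (-(r * max t 0))])]
  norm_num

lemma myIntegral_exp_neg_mul_Ioi {c : ℝ} (hc : 0 < c) :
    ∫ t in Set.Ioi (0:ℝ), Real.exp (-(c * t)) = 1 / c := by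
  have h := integral_comp_mul_left_Ioi (fun x => Real.exp (-x)) 0 hc
  simp only [mul_zero, integral_exp_neg_Ioi_zero, smul_eq_mul, mul_one] at h
  rw [h, one_div]

lemma myProdExpand {ι : Type*} [DecidableEq ι] (K : Finset ι) (f : ι → ℝ) :
    (∏ k ∈ K, (1 - Real.exp (f k)))
    = ∑ φ ∈ K.powerset, (-1:ℝ)^φ.card * Real.exp (∑ p ∈ φ, f p) := by
  have h := Finset.prod_add (fun k => -Real.exp (f k)) (fun _ => (1:ℝ)) K
  simp only [Finset.prod_const_one, mul_one] at h
  calc ∏ k ∈ K, (1 - Real.exp (f k))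
      = ∏ k ∈ K, (-Real.exp (f k) + 1) := by
        apply Finset.prod_congr rfl; intros; ring
    _ = ∑ φ ∈ K.powerset, ∏ p ∈ φ, -Real.exp (f p) := h
    _ = _ := by
        apply Finset.sum_congr rfl
        intro φ _
        rw [Finset.prod_congr rfl (fun p _ => (neg_one_mul (Real.exp (f p))).symm),
          Finset.prod_mul_distrib, Finset.prod_const, Real.exp_sum]

lemma myPointwise {ι : Type*} [DecidableEq ι] (H K : Finset ι) (r : ι → ℝ) (ri : ℝ) (t : ℝ) :
    (ri * Real.exp (-(ri * t))) * (∏ j ∈ H, Real.exp (-(r j * t))) *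
      (∏ k ∈ K, (1 - Real.exp (-(r k * t))))
    = ∑ φ ∈ K.powerset, ((-1:ℝ)^φ.card * ri) *
        Real.exp (-((ri + ∑ j ∈ H, r j + ∑ p ∈ φ, r p) * t)) := by
  rw [myProdExpand K (fun k => -(r k * t)), Finset.mul_sum]
  apply Finset.sum_congr rfl
  intro φ _
  have hH : ∏ j ∈ H, Real.exp (-(r j * t)) = Real.exp (-((∑ j ∈ H, r j) * t)) := by
    rw [← Real.exp_sum]
    congr 1
    rw [Finset.sum_mul]
    simp
  have hφ : (∑ p ∈ φ, -(r p * t)) = -((∑ p ∈ φ, r p) * t) := by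
    rw [Finset.sum_mul]; simp
  rw [hH, hφ, show -((ri + ∑ j ∈ H, r j + ∑ p ∈ φ, r p) * t)
      = -(ri * t) + -((∑ j ∈ H, r j) * t) + -((∑ p ∈ φ, r p) * t) by ring,
    Real.exp_add, Real.exp_add]
  ring


lemma myIntegral {ι : Type*} [DecidableEq ι] (H K : Finset ι) (r : ι → ℝ) (ri : ℝ)
    (hri : 0 < ri) (hrH : ∀ j ∈ H, 0 < r j) (hrK : ∀ k ∈ K, 0 < r k) :
    ∫ t in Set.Ioi (0:ℝ), (ri * Real.exp (-(ri * t))) * (∏ j ∈ H, Real.exp (-(r j * t))) *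
      (∏ k ∈ K, (1 - Real.exp (-(r k * t))))
    = ∑ φ ∈ K.powerset, (-1:ℝ)^φ.card * ri / (ri + ∑ j ∈ H, r j + ∑ p ∈ φ, r p) := by
  have hpos : ∀ φ ∈ K.powerset, 0 < ri + ∑ j ∈ H, r j + ∑ p ∈ φ, r p := by
    intro φ hφ
    have h1 : 0 ≤ ∑ j ∈ H, r j := Finset.sum_nonneg fun j hj => (hrH j hj).le
    have h2 : 0 ≤ ∑ p ∈ φ, r p :=
      Finset.sum_nonneg fun p hp => (hrK p (Finset.mem_powerset.1 hφ hp)).le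
    linarith
  simp only [myPointwise H K r ri]
  have hint : ∀ φ ∈ K.powerset, IntegrableOn
      (fun t => ((-1:ℝ)^φ.card * ri) *
        Real.exp (-((ri + ∑ j ∈ H, r j + ∑ p ∈ φ, r p) * t))) (Set.Ioi 0) := by
    intro φ hφ
    have := exp_neg_integrableOn_Ioi 0 (hpos φ hφ)
    simp only [neg_mul] at this
    exact this.const_mul _
  rw [MeasureTheory.integral_finset_sum K.powerset hint]
  apply Finset.sum_congr rfl
  intro φ hφ
  rw [integral_const_mul, myIntegral_exp_neg_mul_Ioi (hpos φ hφ), mul_one_div]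

/-- For independent exponential random variables `X_j` with rates `r_j` (`j ∈ I`),
and disjoint `H, K ⊆ I ∖ {i}`, the probability that every arm in `H` exceeds `X_i`
while every arm in `K` falls below `X_i` equals the inclusion–exclusion sum
`Σ_{φ ⊆ K} (−1)^{|φ|} r_i / (r_i + Σ_{j∈H} r_j + Σ_{p∈φ} r_p)`. -/
theorem prob_exceed_and_below_eq_inclusion_exclusion
    {Ω : Type*} [MeasurableSpace Ω] (μ : Measure Ω) [IsProbabilityMeasure μ]
    {ι : Type*} [DecidableEq ι] (I : Finset ι) (i : ι) (hi : i ∈ I)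
    (H K : Finset ι) (hH : H ⊆ I \ {i}) (hK : K ⊆ I \ {i}) (hHK : Disjoint H K)
    (r : ι → ℝ) (hr : ∀ j ∈ I, 0 < r j)
    (X : ι → Ω → ℝ) (hX : ∀ j, Measurable (X j))
    (hindep : iIndepFun X μ)
    (hlaw : ∀ j ∈ I, Measure.map (X j) μ = expMeasure (r j)) :
    μ {ω | (∀ j ∈ H, X i ω ≤ X j ω) ∧ (∀ k ∈ K, X k ω ≤ X i ω)} =
      ENNReal.ofReal
        (∑ φ ∈ K.powerset,
          (-1 : ℝ) ^ φ.card * r i / (r i + ∑ j ∈ H, r j + ∑ p ∈ φ, r p)) := by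
  classical
  set T : Finset ι := H ∪ K with hT
  have hHsub : ∀ j ∈ H, j ∈ I := fun j hj => (Finset.mem_sdiff.1 (hH hj)).1
  have hKsub : ∀ k ∈ K, k ∈ I := fun k hk => (Finset.mem_sdiff.1 (hK hk)).1
  have hiT : i ∉ T := by
    simp only [hT, Finset.mem_union]
    rintro (h | h)
    · exact (Finset.mem_sdiff.1 (hH h)).2 (Finset.mem_singleton_self i)
    · exact (Finset.mem_sdiff.1 (hK h)).2 (Finset.mem_singleton_self i)
  set Z : Ω → (↥T → ℝ) := fun ω j => X j ω with hZdef
  have hZ : Measurable Z := measurable_pi_lambda _ fun j => hX j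
  have hW : Measurable (fun ω => (X i ω, Z ω)) := (hX i).prodMk hZ
  set E : Set (ℝ × (↥T → ℝ)) :=
    {p | ∀ j : ↥T, if (j : ι) ∈ H then p.1 ≤ p.2 j else p.2 j ≤ p.1} with hEdef
  have hE : MeasurableSet E := by
    have hEi : E = ⋂ j : ↥T,
        {p : ℝ × (↥T → ℝ) | if (j : ι) ∈ H then p.1 ≤ p.2 j else p.2 j ≤ p.1} := by
      ext p; simp [hEdef, Set.mem_iInter]
    rw [hEi]
    refine MeasurableSet.iInter fun j => ?_
    by_cases hj : (j : ι) ∈ H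
    · simp only [if_pos hj]
      exact measurableSet_le measurable_fst (measurable_snd.eval)
    · simp only [if_neg hj]
      exact measurableSet_le (measurable_snd.eval) measurable_fst
  have hAeq : {ω | (∀ j ∈ H, X i ω ≤ X j ω) ∧ (∀ k ∈ K, X k ω ≤ X i ω)}
      = (fun ω => (X i ω, Z ω)) ⁻¹' E := by
    ext ω
    simp only [Set.mem_setOf_eq, Set.mem_preimage, hEdef]
    constructor
    · rintro ⟨h1, h2⟩ j
      by_cases hj : (j : ι) ∈ H
      · rw [if_pos hj]; exact h1 _ hj
      · rw [if_neg hj]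
        have hjK : (j : ι) ∈ K := (Finset.mem_union.1 j.2).resolve_left hj
        exact h2 _ hjK
    · intro h
      constructor
      · intro j hj
        have := h ⟨j, Finset.mem_union_left K hj⟩
        rwa [if_pos hj] at this
      · intro k hk
        have hkH : k ∉ H := Finset.disjoint_right.1 hHK hk
        have := h ⟨k, Finset.mem_union_right H hk⟩
        rwa [if_neg hkH] at this
  have hInd : IndepFun (X i) Z μ := by
    have hdisj : Disjoint ({i} : Finset ι) T := Finset.disjoint_singleton_left.2 hiT
    have h := hindep.indepFun_finset {i} T hdisj hX
    exact h.comp (measurable_pi_apply (⟨i, Finset.mem_singleton_self i⟩ : ↥({i} : Finset ι)))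
      measurable_id
  have hmap : μ.map (fun ω => (X i ω, Z ω)) = (expMeasure (r i)).prod (μ.map Z) := by
    rw [← hlaw i hi]
    exact (indepFun_iff_map_prod_eq_prod_map_map (hX i).aemeasurable hZ.aemeasurable).1 hInd
  haveI hPZ : IsProbabilityMeasure (μ.map Z) := Measure.isProbabilityMeasure_map hZ.aemeasurable
  rw [hAeq, ← Measure.map_apply hW hE, hmap, Measure.prod_apply hE]
  have hslice : ∀ t : ℝ, (μ.map Z) (Prod.mk t ⁻¹' E)
      = (∏ j ∈ H, ENNReal.ofReal (Real.exp (-(r j * max t 0)))) *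
        ∏ k ∈ K, ENNReal.ofReal (1 - Real.exp (-(r k * max t 0))) := by
    intro t
    have hsliceMS : MeasurableSet (Prod.mk t ⁻¹' E) := measurable_prodMk_left hE
    rw [Measure.map_apply hZ hsliceMS]
    have hpre : Z ⁻¹' (Prod.mk t ⁻¹' E)
        = ⋂ j ∈ T, X j ⁻¹' (if j ∈ H then Set.Ici t else Set.Iic t) := by
      ext ω
      simp only [Set.mem_preimage, Set.mem_iInter, hEdef, Set.mem_setOf_eq]
      constructor
      · intro h j hj
        have h2 := h ⟨j, hj⟩
        by_cases hjH : j ∈ H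
        · rw [if_pos hjH] at h2 ⊢; exact h2
        · rw [if_neg hjH] at h2 ⊢; exact h2
      · intro h j
        have h2 := h j j.2
        by_cases hjH : (j : ι) ∈ H
        · rw [if_pos hjH] at h2 ⊢; exact h2
        · rw [if_neg hjH] at h2 ⊢; exact h2
    rw [hpre, hindep.meas_biInter (fun j _ => ⟨if j ∈ H then Set.Ici t else Set.Iic t,
      by split_ifs; exacts [measurableSet_Ici, measurableSet_Iic], rfl⟩)]
    rw [hT, Finset.prod_union hHK]
    congr 1
    · refine Finset.prod_congr rfl fun j hj => ?_
      rw [if_pos hj, ← Measure.map_apply (hX j) measurableSet_Ici, hlaw j (hHsub j hj),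
        myExpMeasure_Ici (hr j (hHsub j hj))]
    · refine Finset.prod_congr rfl fun k hk => ?_
      rw [if_neg (Finset.disjoint_right.1 hHK hk), ← Measure.map_apply (hX k) measurableSet_Iic,
        hlaw k (hKsub k hk), myExpMeasure_Iic (hr k (hKsub k hk))]
  rw [lintegral_congr hslice]
  set G : ℝ → ℝ≥0∞ := fun t =>
    (∏ j ∈ H, ENNReal.ofReal (Real.exp (-(r j * max t 0)))) *
      ∏ k ∈ K, ENNReal.ofReal (1 - Real.exp (-(r k * max t 0))) with hGdef
  have hGmeas : Measurable G := by
    apply Measurable.mul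
    · exact Finset.measurable_prod _ fun j _ =>
        (((continuous_const.mul (continuous_id.max continuous_const)).neg.rexp).measurable).ennreal_ofReal
    · exact Finset.measurable_prod _ fun k _ =>
        ((continuous_const.sub
          ((continuous_const.mul (continuous_id.max continuous_const)).neg.rexp)).measurable).ennreal_ofReal
  have hpdfmeas : Measurable (exponentialPDF (r i)) :=
    (measurable_exponentialPDFReal (r i)).ennreal_ofReal
  have hexp : expMeasure (r i) = volume.withDensity (exponentialPDF (r i)) := rfl
  rw [hexp, lintegral_withDensity_eq_lintegral_mul _ hpdfmeas hGmeas]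
  rw [← lintegral_add_compl (exponentialPDF (r i) * G) (measurableSet_Ioi (a := (0:ℝ)))]
  have hzero : ∫⁻ t in (Set.Ioi (0:ℝ))ᶜ, (exponentialPDF (r i) * G) t ∂volume = 0 := by
    rw [Set.compl_Ioi, setLIntegral_congr Iio_ae_eq_Iic.symm]
    have hz : ∀ t ∈ Set.Iio (0:ℝ), (exponentialPDF (r i) * G) t = (fun _ => (0:ℝ≥0∞)) t :=
      fun t ht => by simp [Pi.mul_apply, exponentialPDF_of_neg ht]
    rw [setLIntegral_congr_fun measurableSet_Iio hz, lintegral_zero]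
  rw [hzero, add_zero]
  set g : ℝ → ℝ := fun t => (r i * Real.exp (-(r i * t))) * (∏ j ∈ H, Real.exp (-(r j * t))) *
      (∏ k ∈ K, (1 - Real.exp (-(r k * t)))) with hgdef
  have hKnonneg : ∀ t : ℝ, 0 ≤ t → ∀ k ∈ K, 0 ≤ 1 - Real.exp (-(r k * t)) := by
    intro t ht k hk
    have h1 : Real.exp (-(r k * t)) ≤ 1 := by
      rw [Real.exp_le_one_iff]
      have := (hr k (hKsub k hk)).le
      simp only [neg_nonpos]
      positivity
    linarith
  have hIoi : ∫⁻ t in Set.Ioi (0:ℝ), (exponentialPDF (r i) * G) t ∂volume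
      = ∫⁻ t in Set.Ioi (0:ℝ), ENNReal.ofReal (g t) ∂volume := by
    refine setLIntegral_congr_fun measurableSet_Ioi (fun t ht => ?_)
    have ht0 : (0:ℝ) ≤ t := le_of_lt ht
    have hprodH : (0:ℝ) ≤ ∏ j ∈ H, Real.exp (-(r j * t)) :=
      Finset.prod_nonneg fun j _ => (Real.exp_pos _).le
    have e1 : ENNReal.ofReal (g t) = ENNReal.ofReal (r i * Real.exp (-(r i * t)))
        * (ENNReal.ofReal (∏ j ∈ H, Real.exp (-(r j * t)))
          * ENNReal.ofReal (∏ k ∈ K, (1 - Real.exp (-(r k * t))))) := by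
      have hg : g t = (r i * Real.exp (-(r i * t))) * ((∏ j ∈ H, Real.exp (-(r j * t))) *
          (∏ k ∈ K, (1 - Real.exp (-(r k * t))))) := by rw [hgdef]; ring
      have hri : (0:ℝ) < r i := hr i hi
      rw [hg, ENNReal.ofReal_mul (by positivity), ENNReal.ofReal_mul hprodH]
    rw [e1]
    simp only [Pi.mul_apply, hGdef, exponentialPDF_of_nonneg ht0, max_eq_left ht0]
    rw [ENNReal.ofReal_prod_of_nonneg (fun j _ => (Real.exp_pos _).le),
      ENNReal.ofReal_prod_of_nonneg (fun k hk => hKnonneg t ht0 k hk)]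
  rw [hIoi]
  have hpos : ∀ φ ∈ K.powerset, 0 < r i + ∑ j ∈ H, r j + ∑ p ∈ φ, r p := by
    intro φ hφ
    have h1 : 0 ≤ ∑ j ∈ H, r j := Finset.sum_nonneg fun j hj => (hr j (hHsub j hj)).le
    have h2 : 0 ≤ ∑ p ∈ φ, r p :=
      Finset.sum_nonneg fun p hp => (hr p (hKsub p (Finset.mem_powerset.1 hφ hp))).le
    have := hr i hi
    linarith
  have hInt : Integrable g (volume.restrict (Set.Ioi 0)) := by
    have hint : ∀ φ ∈ K.powerset, IntegrableOn
        (fun t => ((-1:ℝ)^φ.card * r i) *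
          Real.exp (-((r i + ∑ j ∈ H, r j + ∑ p ∈ φ, r p) * t))) (Set.Ioi 0) := by
      intro φ hφ
      have h2 := exp_neg_integrableOn_Ioi 0 (hpos φ hφ)
      simp only [neg_mul] at h2
      exact h2.const_mul _
    exact (integrable_finset_sum _ hint).congr
      (ae_of_all _ fun t => (myPointwise H K r (r i) t).symm)
  have hNonneg : 0 ≤ᵐ[volume.restrict (Set.Ioi 0)] g := by
    refine (ae_restrict_iff' measurableSet_Ioi).2 (ae_of_all _ fun t ht => ?_)
    have ht0 : (0:ℝ) ≤ t := le_of_lt ht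
    have h1 : (0:ℝ) ≤ ∏ k ∈ K, (1 - Real.exp (-(r k * t))) :=
      Finset.prod_nonneg fun k hk => hKnonneg t ht0 k hk
    have h2 : (0:ℝ) ≤ ∏ j ∈ H, Real.exp (-(r j * t)) :=
      Finset.prod_nonneg fun j _ => (Real.exp_pos _).le
    have h3 : (0:ℝ) < r i := hr i hi
    simp only [hgdef]
    positivity
  rw [← MeasureTheory.ofReal_integral_eq_lintegral_ofReal hInt hNonneg]
  congr 1
  exact myIntegral H K r (r i) (hr i hi) (fun j hj => hr j (hHsub j hj))
    (fun k hk => hr k (hKsub k hk))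
end

section
/- Let A be a finite index set, let i ∉ A be a distinguished index, let r_i > 0 and r_j > 0 for all j ∈ A, let (X_j)_{j ∈ A ∪ {i}} be independent random variables where each X_j has the exponential distribution with rate r_j, and let m be a natural number. Then the probability that at most m of the variables X_j with j ∈ A satisfy X_j ≥ X_i equals Σ_{H ⊆ A, |H| ≤ m} Σ_{φ ⊆ A∖H} (−1)^{|φ|} · r_i / ( r_i + Σ_{j ∈ H} r_j + Σ_{p ∈ φ} r_p ). -/
open Finset Real MeasureTheory ProbabilityTheory
open Set

lemma measurable_finset_inf' {α κ : Type*} [MeasurableSpace α] (S : Finset κ)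
    (hS : S.Nonempty) (f : κ → α → ℝ) (hf : ∀ j, Measurable (f j)) :
    Measurable fun a => S.inf' hS fun j => f j a := by
  induction hS using Finset.Nonempty.cons_induction with
  | singleton a => simpa using hf a
  | cons a s ha hs ih =>
      have : (fun x => (Finset.cons a s ha).inf' (Finset.cons_nonempty ha) fun j => f j x)
          = fun x => min (f a x) (s.inf' hs fun j => f j x) := by
        funext x; exact Finset.inf'_cons (H := hs) (f := fun j => f j x)
      rw [this]
      exact (hf a).min ih

lemma expMeasure_Ici {r x : ℝ} (hr : 0 < r) (hx : 0 ≤ x) :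
    expMeasure r (Ici x) = ENNReal.ofReal (rexp (-(r * x))) := by
  have h1 : expMeasure r (Ici x) = ∫⁻ y in Ici x, exponentialPDF r y := by
    rw [expMeasure, gammaMeasure, withDensity_apply _ measurableSet_Ici]; rfl
  rw [h1]
  have h2 : ∀ y ∈ Ici x, exponentialPDF r y = ENNReal.ofReal (r * rexp (-(r * y))) :=
    fun y hy => exponentialPDF_of_nonneg (le_trans hx hy)
  rw [setLIntegral_congr_fun measurableSet_Ici h2]
  have hint : IntegrableOn (fun y => r * rexp (-(r * y))) (Ici x) := by
    rw [integrableOn_Ici_iff_integrableOn_Ioi]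
    exact ((exp_neg_integrableOn_Ioi x hr).congr_fun (fun y _ => by ring_nf) measurableSet_Ioi).const_mul r
  rw [← ofReal_integral_eq_lintegral_ofReal hint
    (ae_of_all _ fun y => by positivity)]
  congr 1
  rw [MeasureTheory.integral_Ici_eq_integral_Ioi]
  have : ∀ y, r * rexp (-(r * y)) = r * rexp (-(r * y)) := fun _ => rfl
  rw [MeasureTheory.integral_const_mul]
  have h3 : (∫ y in Ioi x, rexp (-(r * y))) = r⁻¹ * rexp (-(r * x)) := by
    rw [integral_comp_mul_left_Ioi (fun t => rexp (-t)) x hr, integral_exp_neg_Ioi,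
      smul_eq_mul]
  rw [h3]
  field_simp

lemma setLIntegral_ofReal_exp {k c : ℝ} (hk : 0 ≤ k) (hc : 0 < c) :
    ∫⁻ x in Ici (0:ℝ), ENNReal.ofReal (k * rexp (-(c * x))) = ENNReal.ofReal (k / c) := by
  have hint : IntegrableOn (fun y => k * rexp (-(c * y))) (Ici (0:ℝ)) := by
    rw [integrableOn_Ici_iff_integrableOn_Ioi]
    exact ((exp_neg_integrableOn_Ioi 0 hc).congr_fun (fun y _ => by ring_nf)
      measurableSet_Ioi).const_mul k
  rw [← ofReal_integral_eq_lintegral_ofReal hint (ae_of_all _ fun y => by positivity)]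
  congr 1
  rw [MeasureTheory.integral_Ici_eq_integral_Ioi, MeasureTheory.integral_const_mul,
    integral_comp_mul_left_Ioi (fun t => rexp (-t)) 0 hc, mul_zero, integral_exp_neg_Ioi,
    smul_eq_mul, neg_zero, Real.exp_zero, mul_one]
  field_simp

lemma keyA {Ω : Type*} [MeasurableSpace Ω] (μ : Measure Ω) [IsProbabilityMeasure μ]
    {ι : Type*} [DecidableEq ι] (S : Finset ι) (i : ι) (hi : i ∉ S)
    (r : ι → ℝ) (hri : 0 < r i) (hrS : ∀ j ∈ S, 0 < r j)
    (X : ι → Ω → ℝ) (hX : ∀ j, Measurable (X j))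
    (hindep : iIndepFun X μ)
    (hlawi : Measure.map (X i) μ = expMeasure (r i))
    (hlawS : ∀ j ∈ S, Measure.map (X j) μ = expMeasure (r j)) :
    μ (⋂ j ∈ S, {ω | X i ω ≤ X j ω}) = ENNReal.ofReal (r i / (r i + ∑ j ∈ S, r j)) := by
  rcases S.eq_empty_or_nonempty with rfl | hS
  · simp [div_self hri.ne']
  set b := ∑ j ∈ S, r j with hbdef
  have hbpos : 0 < b := Finset.sum_pos hrS hS
  set Z : Ω → ℝ := fun ω => S.inf' hS fun j => X j ω with hZdef
  have hZmeas : Measurable Z := measurable_finset_inf' S hS _ hX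
  have hev : (⋂ j ∈ S, {ω | X i ω ≤ X j ω}) = {ω | X i ω ≤ Z ω} := by
    ext ω; simp [hZdef, Finset.le_inf'_iff]
  -- independence of X i and Z
  have hInd : IndepFun (X i) Z μ := by
    have hiS : Disjoint ({i} : Finset ι) S := by
      simpa [Finset.disjoint_singleton_left] using hi
    have hInd0 := hindep.indepFun_finset {i} S hiS hX
    have hane : S.attach.Nonempty := Finset.attach_nonempty_iff.mpr hS
    have h1 : Measurable fun g : (({i} : Finset ι) : Type _) → ℝ =>
        g ⟨i, Finset.mem_singleton_self i⟩ := measurable_pi_apply _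
    have h2 : Measurable fun g : ((S : Finset ι) : Type _) → ℝ =>
        S.attach.inf' hane fun j => g j :=
      measurable_finset_inf' S.attach hane (fun j (g : ((S : Finset ι) : Type _) → ℝ) => g j) fun j => measurable_pi_apply _
    have := hInd0.comp h1 h2
    have heq : ∀ ω, (S.attach.inf' hane fun j => X (↑j) ω) = Z ω := by
      intro ω
      show _ = S.inf' hS fun j => X j ω
      apply WithTop.coe_injective
      rw [Finset.coe_inf', Finset.coe_inf']
      exact Finset.inf_attach S fun j => ((X j ω : ℝ) : WithTop ℝ)
    have heq2 : ((fun g => S.attach.inf' hane fun j => g j) ∘ fun a (i : {x // x ∈ S}) => X (↑i) a) = Z := funext heq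
    rw [heq2] at this
    exact this
  haveI : IsProbabilityMeasure (Measure.map Z μ) :=
    Measure.isProbabilityMeasure_map hZmeas.aemeasurable
  -- tail of Z
  have hZtail : ∀ x : ℝ, 0 ≤ x → Measure.map Z μ (Ici x) = ENNReal.ofReal (rexp (-(b * x))) := by
    intro x hx
    rw [Measure.map_apply hZmeas measurableSet_Ici]
    have hpre : Z ⁻¹' Ici x = ⋂ j ∈ S, X j ⁻¹' Ici x := by
      ext ω; simp [hZdef, Finset.le_inf'_iff]
    rw [hpre, hindep.meas_biInter (fun j _ => ⟨Ici x, measurableSet_Ici, rfl⟩)]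
    have : ∀ j ∈ S, μ (X j ⁻¹' Ici x) = ENNReal.ofReal (rexp (-(r j * x))) := by
      intro j hj
      rw [← Measure.map_apply (hX j) measurableSet_Ici, hlawS j hj,
        expMeasure_Ici (hrS j hj) hx]
    rw [Finset.prod_congr rfl this, ← ENNReal.ofReal_prod_of_nonneg
      (fun j _ => (Real.exp_pos _).le), ← Real.exp_sum]
    congr 2
    rw [hbdef, Finset.sum_mul]
    simp
  -- reduce to product measure
  have hprod : μ.map (fun ω => (X i ω, Z ω)) = (μ.map (X i)).prod (μ.map Z) :=
    (indepFun_iff_map_prod_eq_prod_map_map (hX i).aemeasurable hZmeas.aemeasurable).mp hInd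
  have hsle : MeasurableSet {p : ℝ × ℝ | p.1 ≤ p.2} := measurableSet_le measurable_fst measurable_snd
  rw [hev]
  have : {ω | X i ω ≤ Z ω} = (fun ω => (X i ω, Z ω)) ⁻¹' {p : ℝ × ℝ | p.1 ≤ p.2} := rfl
  rw [this, ← Measure.map_apply ((hX i).prodMk hZmeas) hsle, hprod,
    Measure.prod_apply hsle, hlawi]
  have hslice : ∀ x : ℝ, (Prod.mk x ⁻¹' {p : ℝ × ℝ | p.1 ≤ p.2}) = Ici x := fun x => rfl
  simp only [hslice]
  -- compute the lintegral against expMeasure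
  have hgmeas : Measurable fun x : ℝ => Measure.map Z μ (Ici x) :=
    Antitone.measurable fun x y hxy => measure_mono (Ici_subset_Ici.mpr hxy)
  have hexp : expMeasure (r i) = volume.withDensity (exponentialPDF (r i)) := rfl
  have hpdfmeas : Measurable (exponentialPDF (r i)) := by
    unfold exponentialPDF
    exact (measurable_exponentialPDFReal _).ennreal_ofReal
  rw [hexp, lintegral_withDensity_eq_lintegral_mul _ hpdfmeas hgmeas]
  simp only [Pi.mul_apply]
  have hptwise : (fun x => exponentialPDF (r i) x * Measure.map Z μ (Ici x)) =
      (Ici (0:ℝ)).indicator fun x => ENNReal.ofReal (r i * rexp (-((r i + b) * x))) := by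
    funext x
    rw [Set.indicator_apply]
    split_ifs with hmem
    · have hx : (0:ℝ) ≤ x := Set.mem_Ici.mp hmem
      rw [exponentialPDF_of_nonneg hx, hZtail x hx, ← ENNReal.ofReal_mul (by positivity)]
      congr 1
      rw [mul_assoc, ← Real.exp_add]
      ring_nf
    · have hx : x < 0 := not_le.mp (fun h => hmem (Set.mem_Ici.mpr h))
      rw [exponentialPDF_of_neg hx, zero_mul]
  rw [hptwise]
  have hli := lintegral_indicator (μ := (volume : Measure ℝ)) (s := Set.Ici (0:ℝ)) measurableSet_Ici
    (fun x => ENNReal.ofReal (r i * rexp (-((r i + b) * x))))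
  exact hli.trans (setLIntegral_ofReal_exp hri.le (by linarith))

lemma inclExcl {Ω : Type*} [MeasurableSpace Ω] (μ : Measure Ω) [IsFiniteMeasure μ]
    {ι : Type*} [DecidableEq ι] (C : ι → Set Ω) (hC : ∀ j, MeasurableSet (C j)) (t : Finset ι) :
    ∀ (B : Set Ω), MeasurableSet B →
      (μ (B ∩ ⋂ p ∈ t, (C p)ᶜ)).toReal =
        ∑ φ ∈ t.powerset, (-1:ℝ)^φ.card * (μ (B ∩ ⋂ p ∈ φ, C p)).toReal := by
  induction t using Finset.induction_on with
  | empty => intro B hB; simp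
  | @insert q t hq ih =>
      intro B hB
      have h1 : B ∩ ⋂ p ∈ insert q t, (C p)ᶜ = (B ∩ (C q)ᶜ) ∩ ⋂ p ∈ t, (C p)ᶜ := by
        ext ω
        simp only [Set.mem_inter_iff, Set.mem_iInter, Finset.mem_insert, Set.mem_compl_iff]
        constructor
        · rintro ⟨h1, h2⟩; exact ⟨⟨h1, h2 q (Or.inl rfl)⟩, fun p hp => h2 p (Or.inr hp)⟩
        · rintro ⟨⟨h1, h2⟩, h3⟩
          exact ⟨h1, fun p hp => hp.elim (fun e => e ▸ h2) (h3 p)⟩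
      rw [h1, ih (B ∩ (C q)ᶜ) (hB.inter (hC q).compl), Finset.sum_powerset_insert hq,
        ← Finset.sum_add_distrib]
      refine Finset.sum_congr rfl fun φ hφ => ?_
      have hqφ : q ∉ φ := fun h => hq (Finset.mem_powerset.mp hφ h)
      set D : Set Ω := ⋂ p ∈ φ, C p with hD
      have e1 : (B ∩ D) \ C q = B ∩ (C q)ᶜ ∩ D := by
        ext ω; simp only [Set.mem_diff, Set.mem_inter_iff, Set.mem_compl_iff]; tauto
      have e2 : (B ∩ D) ∩ C q = B ∩ ⋂ p ∈ insert q φ, C p := by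
        rw [Finset.set_biInter_insert]
        ext ω; simp only [Set.mem_inter_iff]; tauto
      have key := measure_inter_add_diff (μ := μ) (B ∩ D) (hC q)
      rw [e1, e2] at key
      have key' : (μ (B ∩ ⋂ p ∈ insert q φ, C p)).toReal + (μ (B ∩ (C q)ᶜ ∩ D)).toReal
          = (μ (B ∩ D)).toReal := by
        rw [← ENNReal.toReal_add (measure_ne_top μ _) (measure_ne_top μ _), key]
      rw [Finset.card_insert_of_notMem hqφ, pow_succ]
      have e3 : (μ (B ∩ (C q)ᶜ ∩ D)).toReal
          = (μ (B ∩ D)).toReal - (μ (B ∩ ⋂ p ∈ insert q φ, C p)).toReal := by linarith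
      rw [e3]
      ring


/-- For independent exponential random variables `X_j` (`j ∈ A ∪ {i}`) with rates `r_j`,
the probability that at most `m` of the variables indexed by `A` exceed `X_i` equals
the double inclusion–exclusion sum
`Σ_{H ⊆ A, |H| ≤ m} Σ_{φ ⊆ A∖H} (−1)^{|φ|} r_i / (r_i + Σ_{j∈H} r_j + Σ_{p∈φ} r_p)`. -/
theorem prob_atMost_exceed_eq_double_sum
    {Ω : Type*} [MeasurableSpace Ω] (μ : Measure Ω) [IsProbabilityMeasure μ]
    {ι : Type*} [DecidableEq ι] (A : Finset ι) (i : ι) (hi : i ∉ A)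
    (r : ι → ℝ) (hr : ∀ j ∈ insert i A, 0 < r j)
    (X : ι → Ω → ℝ) (hX : ∀ j, Measurable (X j))
    (hindep : iIndepFun X μ)
    (hlaw : ∀ j ∈ insert i A, Measure.map (X j) μ = expMeasure (r j))
    (m : ℕ) :
    μ {ω | (A.filter (fun j => X i ω ≤ X j ω)).card ≤ m} =
      ENNReal.ofReal
        (∑ H ∈ A.powerset.filter (fun H => H.card ≤ m),
          ∑ φ ∈ (A \ H).powerset,
            (-1 : ℝ) ^ φ.card * r i / (r i + ∑ j ∈ H, r j + ∑ p ∈ φ, r p)) := by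
  classical
  set C : ι → Set Ω := fun j => {ω | X i ω ≤ X j ω} with hCdef
  have hCmeas : ∀ j, MeasurableSet (C j) := fun j => measurableSet_le (hX i) (hX j)
  set E : Finset ι → Set Ω := fun H => (⋂ j ∈ H, C j) ∩ ⋂ p ∈ A \ H, (C p)ᶜ with hEdef
  have hEmeas : ∀ H, MeasurableSet (E H) := fun H =>
    (MeasurableSet.biInter (Finset.countable_toSet H) fun j _ => hCmeas j).inter
      (MeasurableSet.biInter (Finset.countable_toSet _) fun p _ => (hCmeas p).compl)
  have hfil : ∀ H, H ⊆ A → ∀ ω, ω ∈ E H → A.filter (fun j => X i ω ≤ X j ω) = H := by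
    intro H hHA ω hω
    obtain ⟨h1, h2⟩ := hω
    ext j
    simp only [Finset.mem_filter]
    constructor
    · rintro ⟨hjA, hj⟩
      by_contra hjH
      exact Set.mem_iInter₂.mp h2 j (Finset.mem_sdiff.mpr ⟨hjA, hjH⟩) hj
    · intro hjH
      exact ⟨hHA hjH, Set.mem_iInter₂.mp h1 j hjH⟩
  have hev : {ω | (A.filter (fun j => X i ω ≤ X j ω)).card ≤ m}
      = ⋃ H ∈ A.powerset.filter (fun H => H.card ≤ m), E H := by
    ext ω
    simp only [Set.mem_setOf_eq, Set.mem_iUnion, exists_prop, Finset.mem_filter,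
      Finset.mem_powerset]
    constructor
    · intro h
      refine ⟨A.filter (fun j => X i ω ≤ X j ω), ⟨Finset.filter_subset _ _, h⟩, ?_, ?_⟩
      · exact Set.mem_iInter₂.mpr fun j hj => (Finset.mem_filter.mp hj).2
      · exact Set.mem_iInter₂.mpr fun p hp hle =>
          (Finset.mem_sdiff.mp hp).2 (Finset.mem_filter.mpr ⟨(Finset.mem_sdiff.mp hp).1, hle⟩)
    · rintro ⟨H, ⟨hHA, hHm⟩, hω1, hω2⟩
      have := hfil H hHA ω ⟨hω1, hω2⟩
      rw [this]; exact hHm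
  have hdisj : (↑(A.powerset.filter (fun H => H.card ≤ m)) : Set (Finset ι)).PairwiseDisjoint E := by
    intro H hH H' hH' hne
    simp only [Finset.coe_filter, Set.mem_setOf_eq, Finset.mem_powerset] at hH hH'
    refine Set.disjoint_left.mpr fun {ω} hω hω' => hne ?_
    rw [← hfil H hH.1 ω hω, ← hfil H' hH'.1 ω hω']
  rw [hev, measure_biUnion_finset hdisj (fun H _ => hEmeas H)]
  have hsum_ne : (∑ H ∈ A.powerset.filter (fun H => H.card ≤ m), μ (E H)) ≠ ⊤ :=
    (ENNReal.sum_lt_top.mpr fun H _ => measure_lt_top μ _).ne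
  rw [← ENNReal.ofReal_toReal hsum_ne]
  congr 1
  rw [ENNReal.toReal_sum (fun H _ => measure_ne_top μ _)]
  refine Finset.sum_congr rfl fun H hH => ?_
  obtain ⟨hHA, hHm⟩ : H ⊆ A ∧ H.card ≤ m := by
    simpa [Finset.mem_powerset] using hH
  have hB : MeasurableSet (⋂ j ∈ H, C j) :=
    MeasurableSet.biInter (Finset.countable_toSet H) fun j _ => hCmeas j
  have hEH : E H = (⋂ j ∈ H, C j) ∩ ⋂ p ∈ A \ H, (C p)ᶜ := rfl
  rw [hEH, inclExcl μ C hCmeas (A \ H) _ hB]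
  refine Finset.sum_congr rfl fun φ hφ => ?_
  have hφsub : φ ⊆ A \ H := Finset.mem_powerset.mp hφ
  have hunion : (⋂ j ∈ H, C j) ∩ ⋂ p ∈ φ, C p = ⋂ j ∈ H ∪ φ, C j := by
    ext ω
    simp only [Set.mem_inter_iff, Set.mem_iInter, Finset.mem_union]
    constructor
    · rintro ⟨h1, h2⟩ j hj; exact hj.elim (h1 j) (h2 j)
    · intro h; exact ⟨fun j hj => h j (Or.inl hj), fun j hj => h j (Or.inr hj)⟩
  rw [hunion]
  have hdisjHφ : Disjoint H φ := Finset.disjoint_left.mpr fun a haH haφ =>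
    (Finset.mem_sdiff.mp (hφsub haφ)).2 haH
  have hsub : H ∪ φ ⊆ A := Finset.union_subset hHA (hφsub.trans (Finset.sdiff_subset))
  have hiHφ : i ∉ H ∪ φ := fun hmem => hi (hsub hmem)
  have hkey := keyA μ (H ∪ φ) i hiHφ r (hr i (Finset.mem_insert_self i A))
    (fun j hj => hr j (Finset.mem_insert_of_mem (hsub hj))) X hX hindep
    (hlaw i (Finset.mem_insert_self i A))
    (fun j hj => hlaw j (Finset.mem_insert_of_mem (hsub hj)))
  have hpos : (0:ℝ) < r i + ∑ j ∈ H ∪ φ, r j := by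
    have h0 : (0:ℝ) ≤ ∑ j ∈ H ∪ φ, r j :=
      Finset.sum_nonneg fun j hj => (hr j (Finset.mem_insert_of_mem (hsub hj))).le
    linarith [hr i (Finset.mem_insert_self i A)]
  rw [hkey, ENNReal.toReal_ofReal (div_nonneg (hr i (Finset.mem_insert_self i A)).le hpos.le),
    Finset.sum_union hdisjHφ]
  ring
end

section
/- Let A be a finite index set, let i ∉ A, and let r_i > 0 and r_j > 0 for all j ∈ A be positive reals. Then Σ_{H ⊆ A} Σ_{φ ⊆ A∖H} (−1)^{|φ|} · r_i / ( r_i + Σ_{j ∈ H} r_j + Σ_{p ∈ φ} r_p ) = 1, where the outer sum ranges over all subsets H of A and the inner sum over all subsets φ of A \ H. -/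
open Finset

/-- Partition-of-unity identity for the closed-form probabilities of the ONETS
regret analysis: summing the inclusion–exclusion expressions over all `H ⊆ A`
gives `1`. -/
theorem sum_inclusion_exclusion_eq_one
    {ι : Type*} [DecidableEq ι] (A : Finset ι) (i : ι) (hi : i ∉ A)
    (r : ι → ℝ) (hri : 0 < r i) (hr : ∀ j ∈ A, 0 < r j) :
    ∑ H ∈ A.powerset, ∑ φ ∈ (A \ H).powerset,
        (-1 : ℝ) ^ φ.card * r i / (r i + ∑ j ∈ H, r j + ∑ p ∈ φ, r p) = 1 := by
  have key : ∑ H ∈ A.powerset, ∑ φ ∈ (A \ H).powerset,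
        (-1 : ℝ) ^ φ.card * r i / (r i + ∑ j ∈ H, r j + ∑ p ∈ φ, r p)
      = ∑ S ∈ A.powerset, ∑ φ ∈ S.powerset,
        (-1 : ℝ) ^ φ.card * r i / (r i + ∑ j ∈ S, r j) := by
    rw [Finset.sum_sigma', Finset.sum_sigma']
    refine Finset.sum_nbij' (fun p => ⟨p.1 ∪ p.2, p.2⟩) (fun p => ⟨p.1 \ p.2, p.2⟩)
      ?_ ?_ ?_ ?_ ?_
    · rintro ⟨H, φ⟩ hp
      simp only [Finset.mem_sigma, Finset.mem_powerset] at hp ⊢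
      exact ⟨Finset.union_subset hp.1 (hp.2.trans (Finset.sdiff_subset)),
        Finset.subset_union_right⟩
    · rintro ⟨S, φ⟩ hp
      simp only [Finset.mem_sigma, Finset.mem_powerset] at hp ⊢
      refine ⟨(Finset.sdiff_subset).trans hp.1, ?_⟩
      intro x hx
      simp only [Finset.mem_sdiff]
      exact ⟨hp.1 (hp.2 hx), fun h => h.2 hx⟩
    · rintro ⟨H, φ⟩ hp
      simp only [Finset.mem_sigma, Finset.mem_powerset] at hp
      have hdisj : Disjoint H φ := by
        refine Finset.disjoint_left.mpr fun x hxH hxφ => ?_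
        exact (Finset.mem_sdiff.mp (hp.2 hxφ)).2 hxH
      simp only [Sigma.mk.inj_iff, heq_eq_eq, and_true]
      exact Finset.union_sdiff_cancel_right hdisj
    · rintro ⟨S, φ⟩ hp
      simp only [Finset.mem_sigma, Finset.mem_powerset] at hp
      simp only [Sigma.mk.inj_iff, heq_eq_eq, and_true]
      exact Finset.sdiff_union_of_subset hp.2
    · rintro ⟨H, φ⟩ hp
      simp only [Finset.mem_sigma, Finset.mem_powerset] at hp
      have hdisj : Disjoint H φ := by
        refine Finset.disjoint_left.mpr fun x hxH hxφ => ?_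
        exact (Finset.mem_sdiff.mp (hp.2 hxφ)).2 hxH
      simp only [Finset.sum_union hdisj]
      ring_nf
  rw [key]
  have step : ∀ S ∈ A.powerset, ∑ φ ∈ S.powerset,
      (-1 : ℝ) ^ φ.card * r i / (r i + ∑ j ∈ S, r j)
      = (if S = ∅ then (1 : ℝ) else 0) * (r i / (r i + ∑ j ∈ S, r j)) := by
    intro S _
    have h : ∑ φ ∈ S.powerset, (-1 : ℝ) ^ φ.card = if S = ∅ then 1 else 0 := by
      have := Finset.sum_powerset_neg_one_pow_card (x := S)
      have := congrArg (fun z : ℤ => (z : ℝ)) this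
      push_cast at this
      simpa using this
    rw [← h, Finset.sum_mul]
    exact Finset.sum_congr rfl fun φ _ => by ring
  rw [Finset.sum_congr rfl step]
  rw [Finset.sum_eq_single ∅ (fun b _ hb => by simp [hb]) (fun h => absurd (Finset.empty_mem_powerset A) h)]
  simp [ne_of_gt hri]
end
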